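/- Let S, M, A be finite types and let f g : S → M. Define update operators U that, given a table T : S → M → (A → ℝ) and a state s, modify only the entry T s m at the encountered message m, with the new value depending only on (s, the old value T s m, and message-independent environment data). Prove by induction: if T₀ is uniform along M (T₀ s m = T₀ s m' for all m, m'), then for every sequence of visited states s₁, …, s_t, the table obtained using messages f(s_i) agrees at (s, f(s)) with the table obtained using messages g(s_i) at (s, g(s)), for every s ∈ S. -/
import Mathlib

/-- Inductive core of Proposition 1: tabular updates at distinct augmented states do not
interfere. Starting from a table `T₀` uniform along `M`, and updating, at each time `t`,
only the entry at the visited state `vs t` and the encountered message (`f (vs t)` resp.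
`g (vs t)`), via an operator `U` depending only on the state and the old entry, the table
obtained with messages from `f` agrees at `(s, f s)` with the table obtained with messages
from `g` at `(s, g s)`, for every state `s` and every time `t`. -/
theorem tabular_update_induction
    {S M A : Type} [Fintype S] [Fintype M] [Fintype A] [DecidableEq S] [DecidableEq M]
    (f g : S → M)
    (T₀ : S → M → A → ℝ)
    (hT₀ : ∀ s m m', T₀ s m = T₀ s m')
    (U : S → (A → ℝ) → (A → ℝ))
    (vs : ℕ → S)
    (Tf Tg : ℕ → S → M → A → ℝ)
    (hTf0 : Tf 0 = T₀) (hTg0 : Tg 0 = T₀)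
    (hTf : ∀ t s m, Tf (t + 1) s m =
      if s = vs t ∧ m = f (vs t) then U s (Tf t s m) else Tf t s m)
    (hTg : ∀ t s m, Tg (t + 1) s m =
      if s = vs t ∧ m = g (vs t) then U s (Tg t s m) else Tg t s m) :
    ∀ (t : ℕ) (s : S), Tf t s (f s) = Tg t s (g s) := by
  intro t
  induction t with
  | zero => intro s; rw [hTf0, hTg0]; exact hT₀ s (f s) (g s)
  | succ t ih =>
    intro s
    rw [hTf, hTg]
    by_cases h : s = vs t
    · subst h
      simp only [and_self, if_true]
      rw [ih (vs t)]
    · simp [h]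
      exact ih s
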